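/- Let b ≥ 2 and k ≥ 1 be integers and let E_k = gcd((b^k − 1)/(b − 1), k). Then E_k divides c_k^b(ℓ) for every integer ℓ ≥ 1. -/

import Mathlib

/-- `ckb b k n = 1 + b^n + b^(2n) + ⋯ + b^((k-1)n)`, i.e., `(b^(kn) - 1)/(b^n - 1)` for `n ≥ 1`. -/
def ckb (b k n : ℕ) : ℕ := ∑ i ∈ Finset.range k, b ^ (i * n)

lemma ckb_mul_eq (b k n : ℕ) : ckb b k n * (b ^ n - 1) = b ^ (k * n) - 1 := by
  rcases le_or_gt b 1 with hb | hb
  · have h1 : b ^ n ≤ 1 := by simpa using Nat.pow_le_pow_left hb n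
    have h2 : b ^ (k * n) ≤ 1 := by simpa using Nat.pow_le_pow_left hb (k * n)
    have h3 : b ^ n - 1 = 0 := by omega
    rw [h3, mul_zero]
    omega
  · have hbn : 1 ≤ b ^ n := Nat.one_le_pow _ _ (by omega)
    have hbkn : 1 ≤ b ^ (k * n) := Nat.one_le_pow _ _ (by omega)
    have h := geom_sum_mul ((b : ℤ) ^ n) k
    have hz : (ckb b k n : ℤ) * ((b : ℤ) ^ n - 1) = (b : ℤ) ^ (k * n) - 1 := by
      rw [mul_comm k n, pow_mul, ← h]
      congr 1
      simp [ckb, pow_mul, mul_comm]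
    have h2 : ((ckb b k n * (b ^ n - 1) : ℕ) : ℤ) = ((b ^ (k * n) - 1 : ℕ) : ℤ) := by
      push_cast [hbn, hbkn]
      exact hz
    exact_mod_cast h2

lemma ckb_pos (b k n : ℕ) (hb : 1 ≤ b) (hk : 1 ≤ k) : 0 < ckb b k n := by
  apply Finset.sum_pos
  · intro i _; positivity
  · exact ⟨0, Finset.mem_range.mpr hk⟩

/-- For `b ≥ 2`, `k ≥ 1`, the number `E_k = gcd((b^k - 1)/(b - 1), k)` divides `c_k^b(ℓ)`
for every `ℓ ≥ 1`. -/
theorem Ek_dvd_ckb (b k : ℕ) (hb : 2 ≤ b) (hk : 1 ≤ k) (ℓ : ℕ) (hℓ : 1 ≤ ℓ) :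
    Nat.gcd ((b ^ k - 1) / (b - 1)) k ∣ ckb b k ℓ := by
  have hb1 : 1 ≤ b := by omega
  have hc1 : ckb b k 1 * (b - 1) = b ^ k - 1 := by
    simpa using ckb_mul_eq b k 1
  have hq : (b ^ k - 1) / (b - 1) = ckb b k 1 :=
    Nat.div_eq_of_eq_mul_left (by omega) hc1.symm
  rw [hq]
  set c1 := ckb b k 1 with hc1def
  set C := ckb b k ℓ with hCdef
  have hCpos : 0 < C := ckb_pos b k ℓ hb1 hk
  have hc1pos : 0 < c1 := ckb_pos b k 1 hb1 hk
  have hdpos : 0 < Nat.gcd c1 k := Nat.gcd_pos_of_pos_left _ hc1pos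
  have hbk : 1 ≤ b ^ k := Nat.one_le_pow _ _ hb1
  have hbl : 2 ≤ b ^ ℓ := by
    calc 2 = 2 ^ 1 := rfl
    _ ≤ b ^ 1 := Nat.pow_le_pow_left hb 1
    _ ≤ b ^ ℓ := Nat.pow_le_pow_right (by omega) hℓ
  have hbkl : 2 ≤ b ^ (k * ℓ) := by
    calc 2 = 2 ^ 1 := rfl
    _ ≤ b ^ 1 := Nat.pow_le_pow_left hb 1
    _ ≤ b ^ (k * ℓ) := Nat.pow_le_pow_right (by omega) (by nlinarith)
  have hC1 : C * (b ^ ℓ - 1) = b ^ (k * ℓ) - 1 := ckb_mul_eq b k ℓ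
  rw [← Nat.factorization_le_iff_dvd hdpos.ne' hCpos.ne']
  intro p
  by_cases hp : p.Prime
  · set a := (Nat.gcd c1 k).factorization p with ha
    have hpa : p ^ a ∣ Nat.gcd c1 k := Nat.ordProj_dvd _ p
    have hpc1 : p ^ a ∣ c1 := hpa.trans (Nat.gcd_dvd_left _ _)
    have hpk : p ^ a ∣ k := hpa.trans (Nat.gcd_dvd_right _ _)
    show a ≤ C.factorization p
    have hfm : C.factorization p + (b ^ ℓ - 1).factorization p
        = (b ^ (k * ℓ) - 1).factorization p := by
      have := Nat.factorization_mul hCpos.ne' (show b ^ ℓ - 1 ≠ 0 by omega)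
      rw [hC1] at this
      rw [this]
      simp
    by_cases hdvd : p ∣ b ^ ℓ - 1
    · -- LTE case
      have hpb : ¬ p ∣ b ^ ℓ := by
        intro h
        have h2 : p ∣ b ^ ℓ - (b ^ ℓ - 1) := Nat.dvd_sub h hdvd
        rw [Nat.sub_sub_self (by omega)] at h2
        exact hp.one_lt.ne' (Nat.dvd_one.mp h2)
      have hkfa : a ≤ k.factorization p :=
        (Nat.Prime.pow_dvd_iff_le_factorization hp (by omega)).mp hpk
      suffices hvk : k.factorization p ≤ C.factorization p by omega
      have hxkl : b ^ (k * ℓ) = (b ^ ℓ) ^ k := by rw [← pow_mul, mul_comm]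
      haveI : Fact p.Prime := ⟨hp⟩
      rcases hp.eq_two_or_odd' with rfl | hodd
      · -- p = 2
        rcases Nat.even_or_odd k with hke | hko
        · have hlte := padicValNat.pow_two_sub_pow (x := b ^ ℓ) (y := 1)
            (by omega) (by simpa using hdvd) hpb (by omega) hke
          simp only [one_pow] at hlte
          have hx1 : 1 ≤ (b ^ ℓ + 1).factorization 2 := by
            rw [← Nat.Prime.pow_dvd_iff_le_factorization hp (by omega), pow_one]
            have : ¬ 2 ∣ b ^ ℓ := hpb
            omega
          simp only [Nat.factorization_def _ hp] at hfm hx1 ⊢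
          rw [hxkl] at hfm
          omega
        · have : ¬ 2 ∣ k := by
            rw [Nat.odd_iff] at hko; omega
          rw [Nat.factorization_eq_zero_of_not_dvd this]
          exact Nat.zero_le _
      · -- p odd
        have hlte := padicValNat.pow_sub_pow hodd (x := b ^ ℓ) (y := 1)
          (by omega) (by simpa using hdvd) hpb (by omega : k ≠ 0)
        simp only [one_pow] at hlte
        simp only [Nat.factorization_def _ hp] at hfm ⊢
        rw [hxkl] at hfm
        omega
    · -- p does not divide b^ℓ - 1
      have hvl : (b ^ ℓ - 1).factorization p = 0 :=
        Nat.factorization_eq_zero_of_not_dvd hdvd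
      have hdvd2 : b ^ k - 1 ∣ b ^ (k * ℓ) - 1 := by
        have := Nat.sub_dvd_pow_sub_pow (b ^ k) 1 ℓ
        simpa [← pow_mul, one_pow] using this
      have h1 : p ^ a ∣ b ^ (k * ℓ) - 1 :=
        (hpc1.trans ⟨b - 1, hc1.symm⟩).trans hdvd2
      have h1le : a ≤ (b ^ (k * ℓ) - 1).factorization p :=
        (Nat.Prime.pow_dvd_iff_le_factorization hp (by omega)).mp h1
      omega
  · simp [Nat.factorization_eq_zero_of_not_prime _ hp]
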